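/- Let M be a minion such that every set M^(n) is finite, and suppose there exists m such that every minion homomorphism ξ : M → M restricts to a bijection ξ^(m) : M^(m) → M^(m), and moreover any two minion homomorphisms M → M agreeing on M^(m) are equal. Then M is a minion core: every minion homomorphism M → M is an automorphism. -/

import Mathlib

/-- An abstract minion: nonempty sets indexed by positive integers with functorial minor maps. -/
structure Minion where
  carrier : ℕ+ → Type
  nonempty : ∀ n : ℕ+, Nonempty (carrier n)
  map : ∀ {n m : ℕ+}, (Fin n → Fin m) → carrier n → carrier m
  map_id : ∀ (n : ℕ+) (f : carrier n), map (id : Fin n → Fin n) f = f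
  map_comp : ∀ {n m k : ℕ+} (α : Fin m → Fin k) (β : Fin n → Fin m) (f : carrier n),
    map α (map β f) = map (α ∘ β) f

/-- A minion homomorphism: an arity-preserving family of maps commuting with minor maps. -/
structure MinionHom (M N : Minion) where
  app : ∀ n : ℕ+, M.carrier n → N.carrier n
  natural : ∀ {n m : ℕ+} (α : Fin n → Fin m) (f : M.carrier n),
    app m (M.map α f) = N.map α (app n f)

/-- `M ∼ N`: minion homomorphisms exist in both directions. -/
def MinionEquiv (M N : Minion) : Prop :=
  Nonempty (MinionHom M N) ∧ Nonempty (MinionHom N M)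

/-- Two minions are isomorphic if there is a homomorphism that is bijective in every arity. -/
def MinionIso (M N : Minion) : Prop :=
  ∃ ξ : MinionHom M N, ∀ n : ℕ+, Function.Bijective (ξ.app n)

/-- An endomorphism is an automorphism if it has a two-sided inverse homomorphism. -/
def IsMinionAut {M : Minion} (ξ : MinionHom M M) : Prop :=
  ∃ μ : MinionHom M M, (∀ (n : ℕ+) (f : M.carrier n), μ.app n (ξ.app n f) = f) ∧
    (∀ (n : ℕ+) (f : M.carrier n), ξ.app n (μ.app n f) = f)

/-- A minion core: every endomorphism is an automorphism. -/
def IsMinionCore (N : Minion) : Prop := ∀ ξ : MinionHom N N, IsMinionAut ξ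


/-- Iterate of a minion endomorphism. -/
def powHom {M : Minion} (xi : MinionHom M M) (k : ℕ) : MinionHom M M where
  app := fun n => (xi.app n)^[k]
  natural := by
    intro n m α f
    induction k with
    | zero => simp
    | succ k ih =>
        simp only [Function.iterate_succ_apply', ih, xi.natural]

theorem core_of_bijective_on_level (M : Minion) (hfin : ∀ n : ℕ+, Finite (M.carrier n))
    (m : ℕ+)
    (hbij : ∀ ξ : MinionHom M M, Function.Bijective (ξ.app m))
    (hext : ∀ ξ ν : MinionHom M M, ξ.app m = ν.app m → ξ = ν) :
    IsMinionCore M := by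
  intro ξ
  haveI : Finite (M.carrier m) := hfin m
  let e : Equiv.Perm (M.carrier m) := Equiv.ofBijective _ (hbij ξ)
  have hk : 0 < orderOf e := orderOf_pos e
  have hiter : ∀ x, (ξ.app m)^[orderOf e] x = x := by
    intro x
    have h1 : (e ^ orderOf e) x = x := by
      rw [pow_orderOf_eq_one e]; rfl
    have h2 : (e ^ orderOf e) x = (ξ.app m)^[orderOf e] x := by
      rw [← Equiv.Perm.iterate_eq_pow]
      rfl
    rw [← h2, h1]
  have hpow : powHom ξ (orderOf e) = powHom ξ 0 := by
    apply hext
    funext x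
    simpa [powHom] using hiter x
  have hall : ∀ (n : ℕ+) (f : M.carrier n), (ξ.app n)^[orderOf e] f = f := by
    intro n f
    have := congrArg (fun ν : MinionHom M M => ν.app n f) hpow
    simpa [powHom] using this
  refine ⟨powHom ξ (orderOf e - 1), ?_, ?_⟩
  · intro n f
    have hkk : orderOf e - 1 + 1 = orderOf e := Nat.succ_pred_eq_of_pos hk
    have : (ξ.app n)^[orderOf e - 1] (ξ.app n f) = (ξ.app n)^[orderOf e] f := by
      conv_rhs => rw [← hkk]
      rw [Function.iterate_succ_apply]
    simpa [powHom] using this.trans (hall n f)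
  · intro n f
    have hkk : orderOf e - 1 + 1 = orderOf e := Nat.succ_pred_eq_of_pos hk
    have : ξ.app n ((ξ.app n)^[orderOf e - 1] f) = (ξ.app n)^[orderOf e] f := by
      conv_rhs => rw [← hkk]
      rw [Function.iterate_succ_apply']
    simpa [powHom] using this.trans (hall n f)
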